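/- Every word fixing the family of conjunctive networks on symmetric directed graphs with n ≥ 2 vertices is (n,1)-universal; hence the fixing length λ_CS(n) of this family is at least λ_1(n). -/

import Mathlib

/-- One asynchronous update step: replace coordinate `i` of `x` by `f x i`. -/
def updateStep {n : ℕ} (f : (Fin n → Bool) → (Fin n → Bool)) (x : Fin n → Bool)
    (i : Fin n) : Fin n → Bool :=
  Function.update x i (f x i)

/-- Action of a word on a state. -/
def applyWord {n : ℕ} (f : (Fin n → Bool) → (Fin n → Bool)) :
    List (Fin n) → (Fin n → Bool) → (Fin n → Bool)
  | [], x => x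
  | i :: w, x => applyWord f w (updateStep f x i)

/-- A word `w` fixes `f` if applying it to any state yields a fixed point of `f`. -/
def Fixes {n : ℕ} (f : (Fin n → Bool) → (Fin n → Bool)) (w : List (Fin n)) : Prop :=
  ∀ x, f (applyWord f w x) = applyWord f w x

/-- The digraph `E` is symmetric: arcs between distinct vertices come in pairs. -/
def SymDigraph {n : ℕ} (E : Fin n → Fin n → Bool) : Prop :=
  ∀ i j : Fin n, i ≠ j → E i j = E j i

/-- The conjunctive network on the digraph `E`: `f_i(x)` is the conjunction of `x_j`
over the in-neighbors `j` of `i` (`1` if `i` has no in-neighbor). -/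
def conjNet {n : ℕ} (E : Fin n → Fin n → Bool) (x : Fin n → Bool) (i : Fin n) : Bool :=
  decide (∀ j : Fin n, E j i = true → x j = true)

/-- A word over alphabet `[n]` is `(n,k)`-universal if it contains as subwords all
words of length `n - k` without repeated letters. -/
def NKUniversal (n k : ℕ) (W : List (Fin n)) : Prop :=
  ∀ u : List (Fin n), u.Nodup → u.length = n - k → u.Sublist W

/-- `λ_k(n)`: the minimum length of an `(n,k)`-universal word. -/
noncomputable def lamK (n k : ℕ) : ℕ :=
  sInf {l : ℕ | ∃ W : List (Fin n), W.length = l ∧ NKUniversal n k W}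

/-- `λ_CS(n)`: the fixing length of the family of conjunctive networks on symmetric
digraphs on `n` vertices. -/
noncomputable def lamCS (n : ℕ) : ℕ :=
  sInf {l : ℕ | ∃ W : List (Fin n), W.length = l ∧
    ∀ E : Fin n → Fin n → Bool, SymDigraph E → Fixes (conjNet E) W}

-- auxiliary section to be appended after the given defs
section CNAux

variable {n : ℕ}

lemma cn_applyWord_append (f : (Fin n → Bool) → (Fin n → Bool)) (w₁ w₂ : List (Fin n))
    (x : Fin n → Bool) :
    applyWord f (w₁ ++ w₂) x = applyWord f w₂ (applyWord f w₁ x) := by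
  induction w₁ generalizing x <;> simp [applyWord, *]

lemma cn_applyWord_fixed {f : (Fin n → Bool) → (Fin n → Bool)} {x : Fin n → Bool}
    (h : f x = x) (w : List (Fin n)) : applyWord f w x = x := by
  induction w with
  | nil => rfl
  | cons a w ih =>
    have hu : updateStep f x a = x := by
      have h1 : f x a = x a := by rw [h]
      simp [updateStep, h1, Function.update_eq_self]
    simp only [applyWord, hu, ih]

lemma conjNet_false_iff (E : Fin n → Fin n → Bool) (x : Fin n → Bool) (i : Fin n) :
    conjNet E x i = false ↔ ∃ j, E j i = true ∧ x j = false := by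
  simp [conjNet]

lemma conjNet_mono {E : Fin n → Fin n → Bool} {x y : Fin n → Bool}
    (h : ∀ j, x j = true → y j = true) (i : Fin n) :
    conjNet E x i = true → conjNet E y i = true := by
  simp only [conjNet, decide_eq_true_iff]
  intro hx j hj
  exact h j (hx j hj)

def cnClosed (E : Fin n → Fin n → Bool) (x : Fin n → Bool) : Prop :=
  ∀ i, x i = false → ∃ j, E j i = true ∧ x j = false

lemma conjNet_false_of_closed {E : Fin n → Fin n → Bool} {x : Fin n → Bool}
    (hc : cnClosed E x) {i : Fin n} (hi : x i = false) : conjNet E x i = false := by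
  rcases hc i hi with ⟨j, hj, hxj⟩
  exact (conjNet_false_iff E x i).2 ⟨j, hj, hxj⟩

lemma cn_closed_update {E : Fin n → Fin n → Bool} {x : Fin n → Bool}
    (hc : cnClosed E x) (a : Fin n) :
    cnClosed E (updateStep (conjNet E) x a) ∧
      (∀ j, updateStep (conjNet E) x a j = true → x j = true) := by
  set x' := updateStep (conjNet E) x a with hx'
  have hne : ∀ j, j ≠ a → x' j = x j := by
    intro j hj; simp [hx', updateStep, Function.update_of_ne hj]
  have ha : x' a = conjNet E x a := by simp [hx', updateStep]
  constructor
  · intro i hi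
    by_cases hia : i = a
    · subst hia
      rw [ha] at hi
      rcases (conjNet_false_iff E x i).1 hi with ⟨j, hj, hxj⟩
      by_cases hja : j = i
      · exact ⟨j, hj, by rw [hja]; rw [ha]; exact hi⟩
      · exact ⟨j, hj, by rw [hne j hja]; exact hxj⟩
    · rw [hne i hia] at hi
      rcases hc i hi with ⟨j, hj, hxj⟩
      by_cases hja : j = a
      · subst hja
        refine ⟨j, hj, ?_⟩
        rw [ha]
        exact conjNet_false_of_closed hc hxj
      · exact ⟨j, hj, by rw [hne j hja]; exact hxj⟩
  · intro j hj
    by_cases hja : j = a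
    · subst hja
      rw [ha] at hj
      by_contra hxa
      have hxa' : x j = false := by simpa using hxa
      rw [conjNet_false_of_closed hc hxa'] at hj
      exact Bool.false_ne_true hj
    · rw [hne j hja] at hj; exact hj

lemma cn_closed_applyWord {E : Fin n → Fin n → Bool} {x : Fin n → Bool}
    (hc : cnClosed E x) (w : List (Fin n)) :
    cnClosed E (applyWord (conjNet E) w x) ∧
      (∀ j, applyWord (conjNet E) w x j = true → x j = true) := by
  induction w generalizing x with
  | nil => exact ⟨hc, fun j h => h⟩
  | cons a w ih =>
    obtain ⟨hc', hd'⟩ := cn_closed_update hc a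
    obtain ⟨hc'', hd''⟩ := ih hc'
    exact ⟨hc'', fun j h => hd' j (hd'' j h)⟩

lemma cn_sweep_inv {E : Fin n → Fin n → Bool} (hs : SymDigraph E) :
    ∀ (r : List (Fin n)) (z : Fin n → Bool), r.Nodup →
      (∀ i, i ∉ r → z i = false →
        ∃ j, E j i = true ∧ ((j ∉ r ∧ z j = false) ∨ (j ∈ r ∧ i ≠ j ∧ E i j = true))) →
      cnClosed E (applyWord (conjNet E) r z) := by
  intro r
  induction r with
  | nil =>
    intro z _ hinv i hi
    rcases hinv i List.not_mem_nil hi with ⟨j, hj, hcase⟩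
    rcases hcase with ⟨_, hzj⟩ | ⟨hjmem, _⟩
    · exact ⟨j, hj, hzj⟩
    · exact absurd hjmem List.not_mem_nil
  | cons a r ih =>
    intro z hnd hinv
    have hanr : a ∉ r := (List.nodup_cons.1 hnd).1
    have hndr : r.Nodup := (List.nodup_cons.1 hnd).2
    show cnClosed E (applyWord (conjNet E) r (updateStep (conjNet E) z a))
    apply ih _ hndr
    set z' := updateStep (conjNet E) z a with hz'
    have hne : ∀ j, j ≠ a → z' j = z j := by
      intro j hj; simp [hz', updateStep, Function.update_of_ne hj]
    have ha : z' a = conjNet E z a := by simp [hz', updateStep]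
    intro i hir hiz
    by_cases hia : i = a
    · subst hia
      rw [ha] at hiz
      rcases (conjNet_false_iff E z i).1 hiz with ⟨m, hm, hzm⟩
      by_cases hmi : m = i
      · subst hmi
        exact ⟨m, hm, Or.inl ⟨hir, by rw [ha]; exact hiz⟩⟩
      · by_cases hmr : m ∈ r
        · exact ⟨m, hm, Or.inr ⟨hmr, fun h => hmi h.symm, by
            rw [hs i m (fun h => hmi h.symm)]; exact hm⟩⟩
        · exact ⟨m, hm, Or.inl ⟨hmr, by rw [hne m hmi]; exact hzm⟩⟩
    · have hirr : i ∉ a :: r := by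
        simp only [List.mem_cons, not_or]; exact ⟨hia, hir⟩
      rw [hne i hia] at hiz
      rcases hinv i hirr hiz with ⟨j, hj, hcase⟩
      rcases hcase with ⟨hjnr, hzj⟩ | ⟨hjmem, hij, hEij⟩
      · have hja : j ≠ a := fun h => hjnr (h ▸ (List.mem_cons_self : a ∈ a :: r))
        have hjnr' : j ∉ r := fun h => hjnr (List.mem_cons_of_mem a h)
        exact ⟨j, hj, Or.inl ⟨hjnr', by rw [hne j hja]; exact hzj⟩⟩
      · by_cases hja : j = a
        · subst hja
          refine ⟨j, hj, Or.inl ⟨hanr, ?_⟩⟩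
          rw [ha]
          exact (conjNet_false_iff E z j).2 ⟨i, hEij, hiz⟩
        · have hjr : j ∈ r := by
            rcases List.mem_cons.1 hjmem with h | h
            · exact absurd h hja
            · exact h
          exact ⟨j, hj, Or.inr ⟨hjr, hij, hEij⟩⟩

lemma cn_sweep_closed {E : Fin n → Fin n → Bool} (hs : SymDigraph E) (x : Fin n → Bool) :
    cnClosed E (applyWord (conjNet E) (List.finRange n) x) := by
  apply cn_sweep_inv hs _ _ (List.nodup_finRange n)
  intro i hi
  exact absurd (List.mem_finRange i) hi

lemma cn_stays_false {E : Fin n → Fin n → Bool} :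
    ∀ (w : List (Fin n)) (z x : Fin n → Bool) (i : Fin n), i ∈ w → cnClosed E z →
      (∀ j, z j = true → x j = true) → conjNet E x i = false →
      applyWord (conjNet E) w z i = false := by
  intro w
  induction w with
  | nil => intro _ _ i hi; exact absurd hi List.not_mem_nil
  | cons a w ih =>
    intro z x i hi hc hle hfx
    by_cases hai : a = i
    · subst hai
      have hz'a : updateStep (conjNet E) z a a = false := by
        simp only [updateStep, Function.update_self]
        by_contra h
        have h' : conjNet E z a = true := by simpa using h
        have h2 := conjNet_mono hle a h'
        rw [hfx] at h2
        exact Bool.false_ne_true h2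
      have hc' := (cn_closed_update hc a).1
      have hmono := (cn_closed_applyWord hc' w).2 a
      show applyWord (conjNet E) w (updateStep (conjNet E) z a) a = false
      by_contra h
      have h' : applyWord (conjNet E) w (updateStep (conjNet E) z a) a = true := by simpa using h
      rw [hmono h'] at hz'a
      simp at hz'a
    · have hiw : i ∈ w := by
        rcases List.mem_cons.1 hi with h | h
        · exact absurd h.symm hai
        · exact h
      have hc' := (cn_closed_update hc a).1
      have hle' : ∀ j, updateStep (conjNet E) z a j = true → x j = true :=
        fun j hj => hle j ((cn_closed_update hc a).2 j hj)
      exact ih _ x i hiw hc' hle' hfx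

def cnWeight (x : Fin n → Bool) : ℕ := (Finset.univ.filter (fun i => x i = true)).card

lemma cn_sweep_decreases {E : Fin n → Fin n → Bool} {z : Fin n → Bool}
    (hc : cnClosed E z) (hnf : conjNet E z ≠ z) :
    cnWeight (applyWord (conjNet E) (List.finRange n) z) < cnWeight z := by
  have hex : ∃ i, conjNet E z i ≠ z i := by
    by_contra h
    push_neg at h
    exact hnf (funext h)
  obtain ⟨i, hi⟩ := hex
  have hzi : z i = true := by
    cases hzi : z i
    · rw [conjNet_false_of_closed hc hzi, hzi] at hi; exact absurd rfl hi
    · rfl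
  have hfzi : conjNet E z i = false := by
    cases hf : conjNet E z i
    · rfl
    · rw [hf, hzi] at hi; exact absurd rfl hi
  set y := applyWord (conjNet E) (List.finRange n) z with hy
  have hyi : y i = false :=
    cn_stays_false _ z z i (List.mem_finRange i) hc (fun _ h => h) hfzi
  have hsub : Finset.univ.filter (fun j => y j = true)
      ⊆ Finset.univ.filter (fun j => z j = true) := by
    intro j hj
    simp only [Finset.mem_filter, Finset.mem_univ, true_and] at hj ⊢
    exact (cn_closed_applyWord hc (List.finRange n)).2 j hj
  apply Finset.card_lt_card
  refine ⟨hsub, fun h => ?_⟩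
  have h2 := h (Finset.mem_filter.2 ⟨Finset.mem_univ i, hzi⟩)
  simp only [Finset.mem_filter, Finset.mem_univ, true_and] at h2
  rw [h2] at hyi
  simp at hyi

def cnSweeps (n : ℕ) : ℕ → List (Fin n)
  | 0 => []
  | k + 1 => List.finRange n ++ cnSweeps n k

lemma cn_sweeps_fix {E : Fin n → Fin n → Bool} :
    ∀ (k : ℕ) (z : Fin n → Bool), cnClosed E z → cnWeight z ≤ k →
      conjNet E (applyWord (conjNet E) (cnSweeps n k) z)
        = applyWord (conjNet E) (cnSweeps n k) z := by
  intro k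
  induction k with
  | zero =>
    intro z hc hw
    have hz : ∀ i, z i = false := by
      intro i
      by_contra h
      have h1 : z i = true := by simpa using h
      have h2 : i ∈ Finset.univ.filter (fun j => z j = true) :=
        Finset.mem_filter.2 ⟨Finset.mem_univ i, h1⟩
      have hpos : 0 < cnWeight z := by unfold cnWeight; exact Finset.card_pos.2 ⟨i, h2⟩
      omega
    show conjNet E z = z
    funext i
    rw [hz i]
    exact conjNet_false_of_closed hc (hz i)
  | succ k ih =>
    intro z hc hw
    by_cases hf : conjNet E z = z
    · show conjNet E (applyWord (conjNet E) (cnSweeps n (k+1)) z) = _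
      rw [cn_applyWord_fixed hf]
      exact hf
    · show conjNet E (applyWord (conjNet E) (List.finRange n ++ cnSweeps n k) z) =
        applyWord (conjNet E) (List.finRange n ++ cnSweeps n k) z
      rw [cn_applyWord_append]
      have hlt := cn_sweep_decreases hc hf
      exact ih _ (cn_closed_applyWord hc (List.finRange n)).1 (by omega)

lemma cn_exists_fixing_word (n : ℕ) :
    ∃ W : List (Fin n), ∀ E : Fin n → Fin n → Bool, SymDigraph E → Fixes (conjNet E) W := by
  refine ⟨List.finRange n ++ cnSweeps n n, fun E hs x => ?_⟩
  rw [cn_applyWord_append]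
  apply cn_sweeps_fix
  · exact cn_sweep_closed hs x
  · calc cnWeight (applyWord (conjNet E) (List.finRange n) x)
        ≤ Finset.univ.card := Finset.card_filter_le _ _
      _ = n := by simp

end CNAux

lemma cn_path_key {n : ℕ} (hn : 2 ≤ n) (E : Fin n → Fin n → Bool) (e : Fin n ≃ Fin n)
    (u : List (Fin n)) (hu : u.length = n - 1)
    (hE : ∀ a b : Fin n, E a b = true ↔
      ((e.symm a : ℕ) + 1 = (e.symm b : ℕ) ∨ (e.symm b : ℕ) + 1 = (e.symm a : ℕ) ∨
        ((e.symm a : ℕ) = (e.symm b : ℕ) ∧ ((e.symm a : ℕ) = 0 ∨ (e.symm a : ℕ) = n - 1))))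
    (hgu : ∀ (m : ℕ) (hm : m < n - 1) (k : Fin n), (k : ℕ) = m + 1 →
      e k = u.get ⟨m, by omega⟩) :
    ∀ (w s : List (Fin n)) (x : Fin n → Bool),
      x (e ⟨0, by omega⟩) = false →
      (∀ k : Fin n, x (e k) = false → (u.take (k : ℕ)).Sublist s) →
      (applyWord (conjNet E) w x (e ⟨0, by omega⟩) = false ∧
        ∀ k : Fin n, applyWord (conjNet E) w x (e k) = false →
          (u.take (k : ℕ)).Sublist (s ++ w)) := by
  intro w
  induction w with
  | nil =>
    intro s x h0 hinv
    exact ⟨h0, fun k hk => by simpa using hinv k hk⟩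
  | cons a w ih =>
    intro s x h0 hinv
    set m : Fin n := e.symm a with hm
    have hea : e m = a := e.apply_symm_apply a
    set x' := updateStep (conjNet E) x a with hx'
    have hxne : ∀ j, j ≠ a → x' j = x j := fun j hj => by
      simp [hx', updateStep, Function.update_of_ne hj]
    have hxa : x' a = conjNet E x a := by simp [hx', updateStep]
    have h0' : x' (e ⟨0, by omega⟩) = false := by
      by_cases hm0 : (m : ℕ) = 0
      · have ha0 : e ⟨0, by omega⟩ = a := by
          rw [← hea]; congr 1; exact Fin.ext hm0.symm
        rw [ha0] at h0
        rw [ha0, hxa]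
        refine (conjNet_false_iff E x a).2 ⟨a, ?_, h0⟩
        rw [hE]
        exact Or.inr (Or.inr ⟨rfl, Or.inl (by rw [← hm]; exact hm0)⟩)
      · have hne : e ⟨0, by omega⟩ ≠ a := by
          intro h
          apply hm0
          rw [hm, ← h, Equiv.symm_apply_apply]
        rw [hxne _ hne]; exact h0
    have hinv' : ∀ k : Fin n, x' (e k) = false → (u.take (k : ℕ)).Sublist (s ++ [a]) := by
      intro k hk
      by_cases hkm : k = m
      · subst hkm
        rw [hea, hxa] at hk
        rcases (conjNet_false_iff E x a).1 hk with ⟨j, hj, hxj⟩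
        rw [hE] at hj
        rcases hj with hcase | hcase | ⟨heq, _⟩
        · set p := e.symm j with hp
          have hxp : x (e p) = false := by rw [hp, Equiv.apply_symm_apply]; exact hxj
          have hps := hinv p hxp
          rw [← hm] at hcase
          have hplt : (p : ℕ) < n - 1 := by have := m.isLt; omega
          have hma : (m : ℕ) = (p : ℕ) + 1 := by omega
          have hgp := hgu (p : ℕ) hplt m hma
          have htake : u.take ((p : ℕ) + 1)
              = u.take (p : ℕ) ++ [u.get ⟨(p : ℕ), by omega⟩] := by
            have hlt : (p : ℕ) < u.length := by omega
            rw [List.take_succ]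
            simp [List.getElem?_eq_getElem hlt, List.get_eq_getElem]
          rw [hma, htake]
          have hgeta : u.get ⟨(p : ℕ), by omega⟩ = a := by
            rw [← hgp, hea]
          rw [hgeta]
          exact List.Sublist.append hps (List.Sublist.refl [a])
        · set p := e.symm j with hp
          have hxp : x (e p) = false := by rw [hp, Equiv.apply_symm_apply]; exact hxj
          have hps := hinv p hxp
          rw [← hm] at hcase
          have hmp : (m : ℕ) ≤ (p : ℕ) := by omega
          have h1 : (u.take (m : ℕ)).Sublist (u.take (p : ℕ)) := by
            have h2 := List.take_sublist (m : ℕ) (u.take (p : ℕ))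
            rwa [List.take_take, min_eq_left hmp] at h2
          exact h1.trans (hps.trans (List.sublist_append_left s [a]))
        · have hja : j = a := e.symm.injective (Fin.ext heq)
          rw [hja] at hxj
          have hxm : x (e m) = false := by rw [hea]; exact hxj
          exact (hinv m hxm).trans (List.sublist_append_left s [a])
      · have hne : e k ≠ a := by
          intro h
          exact hkm (by rw [← hea] at h; exact e.injective h)
        rw [hxne _ hne] at hk
        exact (hinv k hk).trans (List.sublist_append_left s [a])
    have hgoal : applyWord (conjNet E) (a :: w) x = applyWord (conjNet E) w x' := rfl
    rw [hgoal]
    have hres := ih (s ++ [a]) x' h0' hinv'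
    refine ⟨hres.1, fun k hk => ?_⟩
    have h3 := hres.2 k hk
    rwa [List.append_assoc, List.singleton_append] at h3

/-- every word fixing all conjunctive networks on symmetric digraphs on
`n ≥ 2` vertices is `(n,1)`-universal; hence `λ_1(n) ≤ λ_CS(n)`. -/
theorem symmetric_conjunctive_lower_bound (n : ℕ) (hn : 2 ≤ n) :
    (∀ W : List (Fin n),
        (∀ E : Fin n → Fin n → Bool, SymDigraph E → Fixes (conjNet E) W) →
        NKUniversal n 1 W) ∧
      lamK n 1 ≤ lamCS n := by
  have part1 : ∀ W : List (Fin n),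
      (∀ E : Fin n → Fin n → Bool, SymDigraph E → Fixes (conjNet E) W) →
      NKUniversal n 1 W := by
    intro W hW u hnd hlen
    have hex : ∃ i1 : Fin n, i1 ∉ u := by
      by_contra h
      push_neg at h
      have hsub : (Finset.univ : Finset (Fin n)) ⊆ u.toFinset :=
        fun i _ => List.mem_toFinset.2 (h i)
      have hcard := Finset.card_le_card hsub
      rw [List.toFinset_card_of_nodup hnd] at hcard
      simp [hlen] at hcard
      omega
    obtain ⟨i1, hi1⟩ := hex
    set L := i1 :: u with hLdef
    have hLlen : L.length = n := by
      simp only [hLdef, List.length_cons, hlen]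
      omega
    have hLnd : L.Nodup := List.nodup_cons.2 ⟨hi1, hnd⟩
    set g : Fin n → Fin n := fun k => L.get (Fin.cast hLlen.symm k) with hg
    have hginj : Function.Injective g := by
      intro k1 k2 h
      have h2 := List.nodup_iff_injective_get.mp hLnd h
      exact Fin.ext (by simpa using congrArg Fin.val h2)
    set e : Fin n ≃ Fin n :=
      Equiv.ofBijective g (Finite.injective_iff_bijective.mp hginj) with he
    have heapp : ∀ k, e k = g k := fun _ => rfl
    set E : Fin n → Fin n → Bool := fun a b =>
      decide ((e.symm a : ℕ) + 1 = (e.symm b : ℕ) ∨ (e.symm b : ℕ) + 1 = (e.symm a : ℕ) ∨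
        ((e.symm a : ℕ) = (e.symm b : ℕ) ∧
          ((e.symm a : ℕ) = 0 ∨ (e.symm a : ℕ) = n - 1))) with hEdef
    have hEiff : ∀ a b : Fin n, E a b = true ↔
        ((e.symm a : ℕ) + 1 = (e.symm b : ℕ) ∨ (e.symm b : ℕ) + 1 = (e.symm a : ℕ) ∨
          ((e.symm a : ℕ) = (e.symm b : ℕ) ∧
            ((e.symm a : ℕ) = 0 ∨ (e.symm a : ℕ) = n - 1))) := by
      intro a b
      simp [hEdef]
    have hsym : SymDigraph E := by
      intro i j _
      have key : ∀ p q : ℕ,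
          ((p + 1 = q ∨ q + 1 = p ∨ (p = q ∧ (p = 0 ∨ p = n - 1))) ↔
            (q + 1 = p ∨ p + 1 = q ∨ (q = p ∧ (q = 0 ∨ q = n - 1)))) := by
        intro p q
        constructor <;> rintro (h | h | ⟨h1, h2⟩) <;> omega
      simp only [hEdef]
      exact decide_eq_decide.mpr (key _ _)
    have hgu : ∀ (m : ℕ) (hm : m < n - 1) (k : Fin n), (k : ℕ) = m + 1 →
        e k = u.get ⟨m, by omega⟩ := by
      intro m hm k hk
      rw [heapp]
      simp only [hg]
      have hcast : Fin.cast hLlen.symm k = (⟨m + 1, by omega⟩ : Fin L.length) :=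
        Fin.ext (by simp [hk])
      rw [hcast]
      rfl
    set z0 : Fin n := e ⟨0, by omega⟩ with hz0
    set x0 : Fin n → Bool := fun j => decide (j ≠ z0) with hx0
    have h00 : x0 z0 = false := by simp [hx0]
    have hinv0 : ∀ k : Fin n, x0 (e k) = false →
        (u.take (k : ℕ)).Sublist ([] : List (Fin n)) := by
      intro k hk
      have hek : e k = z0 := by simpa [hx0] using hk
      have hk0 : k = ⟨0, by omega⟩ := e.injective (by rw [hek, hz0])
      rw [hk0]
      simp
    obtain ⟨hibase, hifin⟩ := cn_path_key hn E e u hlen hEiff hgu W [] x0 h00 hinv0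
    have hfix := hW E hsym x0
    set y := applyWord (conjNet E) W x0 with hy
    have hall : ∀ (m : ℕ) (hm : m < n), y (e ⟨m, hm⟩) = false := by
      intro m
      induction m with
      | zero => intro hm; exact hibase
      | succ m ih =>
        intro hm
        have hm' : m < n := by omega
        have h1 := ih hm'
        have h2 : conjNet E y (e ⟨m + 1, hm⟩) = false := by
          apply (conjNet_false_iff E y (e ⟨m + 1, hm⟩)).2
          refine ⟨e ⟨m, hm'⟩, ?_, h1⟩
          rw [hEiff]
          left
          simp only [Equiv.symm_apply_apply]
        have h3 := congrFun hfix (e ⟨m + 1, hm⟩)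
        rw [h2] at h3
        exact h3.symm
    have hlast := hall (n - 1) (by omega)
    have hsubl := hifin ⟨n - 1, by omega⟩ hlast
    have htk : u.take (n - 1) = u := by
      rw [← hlen]; exact List.take_length
    simpa [htk] using hsubl
  refine ⟨part1, ?_⟩
  obtain ⟨W0, hW0⟩ := cn_exists_fixing_word n
  have hne : {l : ℕ | ∃ W : List (Fin n), W.length = l ∧
      ∀ E : Fin n → Fin n → Bool, SymDigraph E → Fixes (conjNet E) W}.Nonempty :=
    ⟨W0.length, W0, rfl, hW0⟩
  have h1 : lamCS n ∈ {l : ℕ | ∃ W : List (Fin n), W.length = l ∧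
      ∀ E : Fin n → Fin n → Bool, SymDigraph E → Fixes (conjNet E) W} := Nat.sInf_mem hne
  obtain ⟨W, hWlen, hWfix⟩ := h1
  apply Nat.sInf_le
  exact ⟨W, hWlen, part1 W hWfix⟩
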